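/- The recursively defined sets T_0 = ∅, T_{j+1} = T_j ∪ ((({0,…,2^j−1} \ T_j)) + 2^j) coincide with the sets of odious numbers: T_k = {x ∈ {0,…,2^k−1} : the binary digit sum of x is odd}. -/
import Mathlib


/-- The odious numbers in `{0, …, 2^k - 1}`: those with an odd binary digit sum. -/
def odious (k : ℕ) : Finset ℕ :=
  (Finset.range (2 ^ k)).filter (fun x => Odd ((Nat.digits 2 x).sum))

/-- The evil numbers in `{0, …, 2^k - 1}`: those with an even binary digit sum. -/
def evil (k : ℕ) : Finset ℕ :=
  (Finset.range (2 ^ k)).filter (fun x => Even ((Nat.digits 2 x).sum))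

/-- The recursively defined sets `T_0 = ∅`, `T_{j+1} = T_j ∪ (({0,…,2^j-1} \ T_j) + 2^j)`. -/
def Trec : ℕ → Finset ℕ
  | 0 => ∅
  | (j + 1) => Trec j ∪ ((Finset.range (2 ^ j) \ Trec j).image (· + 2 ^ j))

lemma digitsum_add_pow (j y : ℕ) (hy : y < 2 ^ j) :
    (Nat.digits 2 (y + 2 ^ j)).sum = (Nat.digits 2 y).sum + 1 := by
  have hl : (Nat.digits 2 y).length ≤ j := by
    rcases eq_or_ne y 0 with rfl | hy0
    · simp
    · rw [Nat.digits_len 2 y (by norm_num) hy0]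
      exact Nat.succ_le_of_lt (Nat.log_lt_of_lt_pow hy0 hy)
  have h := Nat.digits_append_zeroes_append_digits (b := 2) (k := j - (Nat.digits 2 y).length)
    (m := 1) (n := y) (by norm_num) one_pos
  rw [Nat.add_sub_cancel' hl, mul_one] at h
  rw [← h]
  simp

/-- The recursively defined sets `T_k` coincide with the sets of odious numbers. -/
theorem Trec_eq_odious (k : ℕ) : Trec k = odious k := by
  induction k with
  | zero =>
    ext x
    simp only [Trec, odious, Finset.notMem_empty, false_iff, Finset.mem_filter,
      Finset.mem_range, pow_zero, Nat.lt_one_iff, not_and]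
    rintro rfl
    simp
  | succ j ih =>
    ext x
    simp only [Trec, ih, odious, Finset.mem_union, Finset.mem_image, Finset.mem_sdiff,
      Finset.mem_filter, Finset.mem_range]
    constructor
    · rintro (⟨hx, hodd⟩ | ⟨y, ⟨hy, hye⟩, rfl⟩)
      · exact ⟨lt_of_lt_of_le hx (Nat.pow_le_pow_right (by norm_num) j.le_succ), hodd⟩
      · refine ⟨by rw [pow_succ]; omega, ?_⟩
        rw [digitsum_add_pow j y hy]
        have : Even ((Nat.digits 2 y).sum) := by
          rcases Nat.even_or_odd ((Nat.digits 2 y).sum) with h | h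
          · exact h
          · exact absurd ⟨hy, h⟩ hye
        exact this.add_one
    · rintro ⟨hx, hodd⟩
      by_cases hx2 : x < 2 ^ j
      · exact Or.inl ⟨hx2, hodd⟩
      · push_neg at hx2
        have hlt : x - 2 ^ j < 2 ^ j := by rw [pow_succ] at hx; omega
        have hxe : x = (x - 2 ^ j) + 2 ^ j := by omega
        right
        refine ⟨x - 2 ^ j, ⟨hlt, ?_⟩, hxe.symm⟩
        rw [hxe, digitsum_add_pow j _ hlt] at hodd
        rintro ⟨-, hodd'⟩
        exact (Nat.not_odd_iff_even.mpr hodd'.add_one) hodd
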